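/- The graph H_{2n,2n+2} (the circulant graph on 2n+2 vertices where vertex i is joined to vertex j whenever i − n ≤ j ≤ i + n modulo 2n+2, i.e., K_{2n+2} minus a perfect matching) is distance magic with magic constant 2n² + 3n, witnessed by the labeling f(v_i) = 2n+2−i for 0 ≤ i ≤ n and f(v_i) = i−n for n+1 ≤ i ≤ 2n+1. -/

import Mathlib

open scoped Classical
open Finset

/-- Weight of a vertex: sum of labels over its open neighborhood. -/
noncomputable def wsum {V : Type*} [Fintype V] (G : SimpleGraph V) (f : V → ℕ) (u : V) : ℕ :=
  ∑ v ∈ Finset.univ.filter (fun v => G.Adj u v), f v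

/-- A graph is distance magic if some bijective labeling by 1,...,n has constant weights. -/
def IsDistanceMagic {V : Type*} [Fintype V] (G : SimpleGraph V) : Prop :=
  ∃ (f : V ≃ Fin (Fintype.card V)) (c : ℕ),
    ∀ u, wsum G (fun v => (f v : ℕ) + 1) u = c

/-- `G` is `r`-regular. -/
def IsRegularDeg {V : Type*} [Fintype V] (G : SimpleGraph V) (r : ℕ) : Prop :=
  ∀ u : V, (Finset.univ.filter (fun v => G.Adj u v)).card = r

/-- `(a,d)`-distance antimagic: some bijective labeling by 1,...,n has weight set
`{a, a+d, ..., a+(n-1)d}`. -/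
def IsDistAntimagic {V : Type*} [Fintype V] (G : SimpleGraph V) (a d : ℕ) : Prop :=
  ∃ f : V ≃ Fin (Fintype.card V),
    Finset.image (fun u => wsum G (fun v => (f v : ℕ) + 1) u) Finset.univ
      = Finset.image (fun i : Fin (Fintype.card V) => a + (i : ℕ) * d) Finset.univ

/-- Circulant graph on `N` vertices with jumps `1,...,m` (so `H_{2m,N} = C_N^m`). -/
def circulant (N m : ℕ) : SimpleGraph (Fin N) :=
  SimpleGraph.fromRel (fun i j => ∃ k, 1 ≤ k ∧ k ≤ m ∧ ((i : ℕ) + k) % N = (j : ℕ))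

/-- The graph `(K_{n-1} - M) + K_1`: vertex `0` joined to all, and vertices `1,...,n-1`
forming a complete graph minus the perfect matching pairing `i` with `i + (n-1)/2 (mod n-1)`. -/
def calG (n : ℕ) : SimpleGraph (Fin n) :=
  SimpleGraph.fromRel (fun i j =>
    (i : ℕ) = 0 ∨ (j : ℕ) = 0 ∨
      ¬ (((i : ℕ) - 1 + (n - 1) / 2) % (n - 1) = (j : ℕ) - 1))

/-- Lexicographic product `G ∘ H`. -/
def lexProd {α β : Type*} (G : SimpleGraph α) (H : SimpleGraph β) : SimpleGraph (α × β) where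
  Adj x y := G.Adj x.1 y.1 ∨ (x.1 = y.1 ∧ H.Adj x.2 y.2)
  symm := ⟨by
    rintro ⟨a, b⟩ ⟨c, d⟩ (h | ⟨h1, h2⟩)
    · exact Or.inl h.symm
    · exact Or.inr ⟨h1.symm, h2.symm⟩⟩
  loopless := ⟨by
    rintro ⟨a, b⟩ (h | ⟨-, h⟩)
    · exact h.ne rfl
    · exact h.ne rfl⟩

/-- Direct (tensor) product `G × H`. -/
def tensorProd {α β : Type*} (G : SimpleGraph α) (H : SimpleGraph β) : SimpleGraph (α × β) where
  Adj x y := G.Adj x.1 y.1 ∧ H.Adj x.2 y.2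
  symm := ⟨fun _ _ h => ⟨h.1.symm, h.2.symm⟩⟩
  loopless := ⟨fun x h => h.1.ne rfl⟩

/-- The Harary graph `H_{3,n}`. -/
noncomputable def harary3 (n : ℕ) : SimpleGraph (Fin n) :=
  circulant n 1 ⊔ SimpleGraph.fromRel (fun i j =>
    if n % 2 = 0 then
      ∃ k, 1 ≤ k ∧ k ≤ n / 2 ∧ (i : ℕ) = k ∧ (j : ℕ) = (k + n / 2) % n
    else
      ((i : ℕ) = 0 ∧ ((j : ℕ) = (n - 1) / 2 ∨ (j : ℕ) = (n + 1) / 2)) ∨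
      (∃ k, 1 ≤ k ∧ k < (n - 1) / 2 ∧ (i : ℕ) = k ∧ (j : ℕ) = (k + (n + 1) / 2) % n))

/-- The Harary graph `H_{2n+1,2n+3}`: `C_{2n+3}^n` together with edges `v_0 v_{n+1}`,
`v_0 v_{n+2}` and `v_i v_{i+n+2}` for `1 ≤ i < n+1`. -/
def hararyOdd (n : ℕ) : SimpleGraph (Fin (2 * n + 3)) :=
  circulant (2 * n + 3) n ⊔ SimpleGraph.fromRel (fun i j =>
    ((i : ℕ) = 0 ∧ ((j : ℕ) = n + 1 ∨ (j : ℕ) = n + 2)) ∨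
    (∃ k, 1 ≤ k ∧ k < n + 1 ∧ (i : ℕ) = k ∧ (j : ℕ) = k + n + 2))

/-- The Harary graph `H_{4n+1,4n+4}`: circulant with jumps `1,...,2n` and `2n+2`. -/
def harary41 (n : ℕ) : SimpleGraph (Fin (4 * n + 4)) :=
  SimpleGraph.fromRel (fun i j =>
    ∃ k, ((1 ≤ k ∧ k ≤ 2 * n) ∨ k = 2 * n + 2) ∧ ((i : ℕ) + k) % (4 * n + 4) = (j : ℕ))

/-- The join `G + K_1`. -/
def joinK1 {V : Type*} (G : SimpleGraph V) : SimpleGraph (V ⊕ Unit) :=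
  SimpleGraph.fromRel (fun x y =>
    match x, y with
    | Sum.inl a, Sum.inl b => G.Adj a b
    | Sum.inl _, Sum.inr _ => True
    | Sum.inr _, _ => False)


private lemma modsub (a N : ℕ) (hN : 0 < N) (h : a < 2 * N) :
    (a % N = a ∧ a < N) ∨ (a % N = a - N ∧ N ≤ a) := by
  rcases Nat.lt_or_ge a N with h1 | h1
  · exact Or.inl ⟨Nat.mod_eq_of_lt h1, h1⟩
  · refine Or.inr ⟨?_, h1⟩
    rw [Nat.mod_eq_sub_mod h1, Nat.mod_eq_of_lt (by omega)]

private lemma circ_adj (n : ℕ) (u v : Fin (2 * n + 2)) :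
    (circulant (2 * n + 2) n).Adj u v ↔
      u ≠ v ∧ (v : ℕ) ≠ ((u : ℕ) + n + 1) % (2 * n + 2) := by
  have ha : (u : ℕ) < 2 * n + 2 := u.isLt
  have hb : (v : ℕ) < 2 * n + 2 := v.isLt
  rw [circulant, SimpleGraph.fromRel_adj]
  have m3 := modsub ((u : ℕ) + n + 1) (2 * n + 2) (by omega) (by omega)
  constructor
  · rintro ⟨hne, ⟨k, hk1, hk2, hk3⟩ | ⟨k, hk1, hk2, hk3⟩⟩ <;> refine ⟨hne, ?_⟩
    · have m1 := modsub ((u : ℕ) + k) (2 * n + 2) (by omega) (by omega)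
      omega
    · have m2 := modsub ((v : ℕ) + k) (2 * n + 2) (by omega) (by omega)
      omega
  · rintro ⟨hne, hd⟩
    refine ⟨hne, ?_⟩
    have hne' : (u : ℕ) ≠ (v : ℕ) := fun h => hne (Fin.ext h)
    rcases Nat.lt_or_ge (u : ℕ) (v : ℕ) with hlt | hge
    · rcases Nat.lt_or_ge n ((v : ℕ) - (u : ℕ)) with h2 | h2
      · have h3 : (v : ℕ) - (u : ℕ) ≠ n + 1 := by omega
        refine Or.inr ⟨(u : ℕ) + (2 * n + 2) - (v : ℕ), by omega, by omega, ?_⟩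
        have he : (v : ℕ) + ((u : ℕ) + (2 * n + 2) - (v : ℕ)) = (u : ℕ) + (2 * n + 2) := by
          omega
        rw [he, Nat.add_mod_right, Nat.mod_eq_of_lt ha]
      · refine Or.inl ⟨(v : ℕ) - (u : ℕ), by omega, h2, ?_⟩
        have he : (u : ℕ) + ((v : ℕ) - (u : ℕ)) = (v : ℕ) := by omega
        rw [he, Nat.mod_eq_of_lt hb]
    · rcases Nat.lt_or_ge n ((u : ℕ) - (v : ℕ)) with h2 | h2
      · have h3 : (u : ℕ) - (v : ℕ) ≠ n + 1 := by omega
        refine Or.inl ⟨(v : ℕ) + (2 * n + 2) - (u : ℕ), by omega, by omega, ?_⟩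
        have he : (u : ℕ) + ((v : ℕ) + (2 * n + 2) - (u : ℕ)) = (v : ℕ) + (2 * n + 2) := by
          omega
        rw [he, Nat.add_mod_right, Nat.mod_eq_of_lt hb]
      · refine Or.inr ⟨(u : ℕ) - (v : ℕ), by omega, h2, ?_⟩
        have he : (v : ℕ) + ((u : ℕ) - (v : ℕ)) = (u : ℕ) := by omega
        rw [he, Nat.mod_eq_of_lt ha]

private lemma total_sum (n : ℕ) :
    ∑ i : Fin (2 * n + 2),
      (if (i : ℕ) ≤ n then 2 * n + 2 - (i : ℕ) else (i : ℕ) - n)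
      = (n + 1) * (2 * n + 3) := by
  rw [Fin.sum_univ_eq_sum_range (fun i => if i ≤ n then 2 * n + 2 - i else i - n)]
  rw [Finset.range_eq_Ico, ← Finset.sum_Ico_consecutive _ (by omega : 0 ≤ n + 1)
    (by omega : n + 1 ≤ 2 * n + 2)]
  have e1 : ∑ i ∈ Finset.Ico 0 (n + 1), (if i ≤ n then 2 * n + 2 - i else i - n)
      = ∑ i ∈ Finset.range (n + 1), (n + 2 + i) := by
    rw [← Finset.range_eq_Ico]
    rw [← Finset.sum_range_reflect (fun i => if i ≤ n then 2 * n + 2 - i else i - n) (n + 1)]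
    refine Finset.sum_congr rfl fun i hi => ?_
    have hi' : i < n + 1 := Finset.mem_range.mp hi
    rw [if_pos (by omega)]
    omega
  have e2 : ∑ i ∈ Finset.Ico (n + 1) (2 * n + 2), (if i ≤ n then 2 * n + 2 - i else i - n)
      = ∑ i ∈ Finset.range (n + 1), (1 + i) := by
    rw [Finset.sum_Ico_eq_sum_range]
    have h21 : 2 * n + 2 - (n + 1) = n + 1 := by omega
    rw [h21]
    refine Finset.sum_congr rfl fun i hi => ?_
    rw [if_neg (by omega)]
    omega
  rw [e1, e2]
  have a1 : ∑ i ∈ Finset.range (n + 1), (n + 2 + i)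
      = (n + 1) * (n + 2) + ∑ i ∈ Finset.range (n + 1), i := by
    rw [Finset.sum_add_distrib, Finset.sum_const, Finset.card_range, smul_eq_mul]
  have a2 : ∑ i ∈ Finset.range (n + 1), (1 + i)
      = (n + 1) * 1 + ∑ i ∈ Finset.range (n + 1), i := by
    rw [Finset.sum_add_distrib, Finset.sum_const, Finset.card_range, smul_eq_mul]
  rw [a1, a2]
  have hG := Finset.sum_range_id_mul_two (n + 1)
  have p1 : (n + 1) * (n + 2) = n * n + 3 * n + 2 := by ring
  have p2 : (n + 1) * (n + 1 - 1) = n * n + n := by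
    simp only [Nat.add_sub_cancel]; ring
  have p3 : (n + 1) * (2 * n + 3) = 2 * (n * n) + 5 * n + 3 := by ring
  omega

/-- H_{2n,2n+2} is distance magic with constant 2n^2+3n, witnessed by the
labeling f(v_i) = 2n+2-i for i ≤ n and f(v_i) = i-n for n+1 ≤ i ≤ 2n+1. -/
theorem harary_even_distance_magic (n : ℕ) :
    Set.BijOn (fun i : Fin (2 * n + 2) =>
        if (i : ℕ) ≤ n then 2 * n + 2 - (i : ℕ) else (i : ℕ) - n)
      Set.univ (Set.Icc 1 (2 * n + 2)) ∧
    (∀ u, wsum (circulant (2 * n + 2) n)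
        (fun i => if (i : ℕ) ≤ n then 2 * n + 2 - (i : ℕ) else (i : ℕ) - n) u
      = 2 * n ^ 2 + 3 * n) := by
  constructor
  · refine ⟨fun i _ => ?_, fun i _ j _ h => ?_, fun m hm => ?_⟩
    · have hi := i.isLt
      simp only [Set.mem_Icc]
      split_ifs <;> omega
    · have hi := i.isLt
      have hj := j.isLt
      simp only at h
      split_ifs at h <;> exact Fin.ext (by omega)
    · simp only [Set.mem_Icc] at hm
      rcases Nat.lt_or_ge m (n + 2) with h2 | h2
      · refine ⟨⟨m + n, by omega⟩, Set.mem_univ _, ?_⟩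
        show (if m + n ≤ n then 2 * n + 2 - (m + n) else m + n - n) = m
        rw [if_neg (by omega)]
        omega
      · refine ⟨⟨2 * n + 2 - m, by omega⟩, Set.mem_univ _, ?_⟩
        show (if 2 * n + 2 - m ≤ n then 2 * n + 2 - (2 * n + 2 - m) else 2 * n + 2 - m - n) = m
        rw [if_pos (by omega)]
        omega
  · intro u
    have hu := u.isLt
    have haux : ((u : ℕ) + n + 1) % (2 * n + 2) < 2 * n + 2 := Nat.mod_lt _ (by omega)
    obtain ⟨au, hauval⟩ :
        ∃ au : Fin (2 * n + 2), (au : ℕ) = ((u : ℕ) + n + 1) % (2 * n + 2) :=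
      ⟨⟨_, haux⟩, rfl⟩
    have m3 := modsub ((u : ℕ) + n + 1) (2 * n + 2) (by omega) (by omega)
    have huau : u ≠ au := by
      intro h
      have h' : (u : ℕ) = (au : ℕ) := congrArg Fin.val h
      omega
    set f : Fin (2 * n + 2) → ℕ :=
      fun i => if (i : ℕ) ≤ n then 2 * n + 2 - (i : ℕ) else (i : ℕ) - n with hf
    have hfilter : Finset.univ.filter (fun v => (circulant (2 * n + 2) n).Adj u v)
        = Finset.univ \ {u, au} := by
      ext v
      simp only [Finset.mem_filter, Finset.mem_univ, true_and, Finset.mem_sdiff,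
        Finset.mem_insert, Finset.mem_singleton, circ_adj]
      constructor
      · rintro ⟨h1, h2⟩
        push_neg
        exact ⟨fun h => h1 h.symm, fun h => h2 (by rw [← hauval, h])⟩
      · intro h
        push_neg at h
        refine ⟨fun h' => h.1 h'.symm, fun h' => h.2 (Fin.ext (by rw [h', hauval]))⟩
    have hpair : f u + f au = 2 * n + 3 := by
      rcases Nat.lt_or_ge n (u : ℕ) with h | h
      · have hval : (au : ℕ) = (u : ℕ) - (n + 1) := by omega
        have h1 : f u = (u : ℕ) - n := by rw [hf]; exact if_neg (by omega)
        have h2 : f au = 2 * n + 2 - (au : ℕ) := by rw [hf]; exact if_pos (by omega)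
        omega
      · have hval : (au : ℕ) = (u : ℕ) + n + 1 := by omega
        have h1 : f u = 2 * n + 2 - (u : ℕ) := by rw [hf]; exact if_pos h
        have h2 : f au = (au : ℕ) - n := by rw [hf]; exact if_neg (by omega)
        omega
    have hsdiff := Finset.sum_sdiff (f := f)
      (fun x _ => Finset.mem_univ x : ({u, au} : Finset (Fin (2 * n + 2))) ⊆ Finset.univ)
    rw [Finset.sum_pair huau] at hsdiff
    have htot : ∑ i : Fin (2 * n + 2), f i = (n + 1) * (2 * n + 3) := total_sum n
    have hexp : (n + 1) * (2 * n + 3) = 2 * n ^ 2 + 3 * n + (2 * n + 3) := by ring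
    rw [wsum, hfilter]
    omega
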